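/- Fix natural numbers m₁ ≥ 1 and m₂, and set m = m₁ + m₂. Consider the uniform probability distribution on the set of binary strings of length m containing exactly m₁ symbols 'a' and m₂ symbols 'b'. For a natural number k with 1 ≤ k ≤ m₁ and 2·k ≤ m, let s_{1k} denote the number of maximal runs of consecutive a's having length at least k and let E := E[s_{1k}]. Then Var[s_{1k}] = (m₂+1)^{(2)}·m₁^{(2k)} / m^{(2k)} + E·(1 − E), where a^{(j)} denotes the falling factorial a·(a−1)···(a−j+1) with a^{(0)} = 1. -/

import Mathlib

open Finset

/-- The number of maximal runs of `a`'s (`true`s) of length at least `k` in a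
binary string `w` of length `m`: each such run is counted once via its starting
position `i`, i.e. a position with `k` consecutive `true`s from `i` on, whose
predecessor (if any) is `false`. -/
def runsAtLeast (m k : ℕ) (w : Fin m → Bool) : ℕ :=
  (Finset.univ.filter (fun i : Fin m =>
    (i : ℕ) + k ≤ m ∧
    (∀ j : Fin m, (i : ℕ) ≤ (j : ℕ) → (j : ℕ) < (i : ℕ) + k → w j = true) ∧
    (∀ j : Fin m, (j : ℕ) + 1 = (i : ℕ) → w j = false))).card


def startP (m k : ℕ) (i : Fin m) (w : Fin m → Bool) : Prop :=
  (i : ℕ) + k ≤ m ∧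
  (∀ j : Fin m, (i : ℕ) ≤ (j : ℕ) → (j : ℕ) < (i : ℕ) + k → w j = true) ∧
  (∀ j : Fin m, (j : ℕ) + 1 = (i : ℕ) → w j = false)

instance (m k : ℕ) (i : Fin m) (w : Fin m → Bool) : Decidable (startP m k i w) := by
  unfold startP; infer_instance

def runsAtLeast' (m k : ℕ) (w : Fin m → Bool) : ℕ :=
  (Finset.univ.filter (fun i : Fin m =>
    (i : ℕ) + k ≤ m ∧
    (∀ j : Fin m, (i : ℕ) ≤ (j : ℕ) → (j : ℕ) < (i : ℕ) + k → w j = true) ∧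
    (∀ j : Fin m, (j : ℕ) + 1 = (i : ℕ) → w j = false))).card

lemma runsAtLeast'_eq (m k : ℕ) (w : Fin m → Bool) :
    runsAtLeast' m k w = (Finset.univ.filter (fun i : Fin m => startP m k i w)).card := by
  unfold runsAtLeast'
  congr 1

lemma two_mul_sum_lt {α : Type*} [LinearOrder α] [DecidableEq α] (t : Finset α) (f : α × α → ℕ)
    (hsym : ∀ a b, f (a, b) = f (b, a)) (hdiag : ∀ a, f (a, a) = 0) :
    ∑ p ∈ t ×ˢ t, f p = 2 * ∑ p ∈ (t ×ˢ t).filter (fun p => p.1 < p.2), f p := by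
  rw [← Finset.sum_filter_add_sum_filter_not (t ×ˢ t) (fun p => p.1 < p.2) f]
  have h1 : ∑ p ∈ (t ×ˢ t).filter (fun p => ¬ p.1 < p.2), f p
      = ∑ p ∈ (t ×ˢ t).filter (fun p => p.2 < p.1), f p := by
    refine (Finset.sum_subset ?_ ?_).symm
    · intro p hp
      simp only [Finset.mem_filter] at hp ⊢
      exact ⟨hp.1, lt_asymm hp.2⟩
    · intro p hp hnp
      simp only [Finset.mem_filter] at hp hnp
      have heq : p.1 = p.2 := le_antisymm (not_lt.mp (fun h => hnp ⟨hp.1, h⟩)) (not_lt.mp hp.2)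
      calc f p = f (p.1, p.2) := by rw [Prod.mk.eta]
        _ = 0 := by rw [heq, hdiag]
  have h2 : ∑ p ∈ (t ×ˢ t).filter (fun p => p.2 < p.1), f p
      = ∑ p ∈ (t ×ˢ t).filter (fun p => p.1 < p.2), f p := by
    apply Finset.sum_nbij' (fun p => Prod.swap p) (fun p => Prod.swap p)
    · intro p hp; simp only [Finset.mem_filter, Finset.mem_product] at hp ⊢
      exact ⟨⟨hp.1.2, hp.1.1⟩, hp.2⟩
    · intro p hp; simp only [Finset.mem_filter, Finset.mem_product] at hp ⊢
      exact ⟨⟨hp.1.2, hp.1.1⟩, hp.2⟩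
    · intro p _; simp
    · intro p _; simp
    · intro p _; exact (hsym p.2 p.1).symm
  rw [h1, h2]; ring


def OmS (m m₁ : ℕ) : Finset (Fin m → Bool) :=
  Finset.univ.filter (fun w => (Finset.univ.filter (fun i => w i = true)).card = m₁)

def TrS (m k : ℕ) (i : Fin m) : Finset (Fin m) :=
  Finset.univ.filter (fun x => (i : ℕ) ≤ (x : ℕ) ∧ (x : ℕ) < (i : ℕ) + k)

def FaS (m : ℕ) (i : Fin m) : Finset (Fin m) :=
  Finset.univ.filter (fun x => (x : ℕ) + 1 = (i : ℕ))

lemma card_filter_val (m : ℕ) (P : ℕ → Prop) [DecidablePred P] :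
    (Finset.univ.filter (fun x : Fin m => P x.val)).card = ((Finset.range m).filter P).card := by
  apply Finset.card_nbij (fun x => x.val)
  · intro x hx; simp only [Finset.mem_filter, Finset.mem_univ, true_and, Finset.mem_range] at hx ⊢
    exact Finset.mem_filter.mpr ⟨Finset.mem_range.mpr x.isLt, (Finset.mem_filter.mp hx).2⟩
  · intro x _ y _ h; exact Fin.val_injective h
  · intro b hb
    simp only [Finset.coe_filter, Finset.mem_range, Set.mem_setOf_eq, Finset.mem_coe,
      Finset.mem_univ, true_and] at hb ⊢
    exact ⟨⟨b, hb.1⟩, hb.2, rfl⟩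

lemma TrS_card (m k : ℕ) (i : Fin m) (h : (i : ℕ) + k ≤ m) : (TrS m k i).card = k := by
  unfold TrS
  rw [card_filter_val m (fun n => (i : ℕ) ≤ n ∧ n < (i : ℕ) + k)]
  have : (Finset.range m).filter (fun n => (i : ℕ) ≤ n ∧ n < (i : ℕ) + k)
      = Finset.Ico (i : ℕ) ((i : ℕ) + k) := by
    ext a; simp only [Finset.mem_filter, Finset.mem_range, Finset.mem_Ico]; omega
  rw [this, Nat.card_Ico]; omega

lemma FaS_card (m : ℕ) (i : Fin m) :
    (FaS m i).card = if (i : ℕ) = 0 then 0 else 1 := by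
  unfold FaS
  rw [card_filter_val m (fun n => n + 1 = (i : ℕ))]
  have hi := i.isLt
  rcases Nat.eq_zero_or_pos (i : ℕ) with h | h
  · rw [if_pos h]
    have he : (Finset.range m).filter (fun n => n + 1 = (i : ℕ)) = ∅ := by
      ext a; simp only [Finset.mem_filter, Finset.mem_range, Finset.notMem_empty, iff_false,
        not_and]
      omega
    rw [he, Finset.card_empty]
  · rw [if_neg (by omega)]
    have he : (Finset.range m).filter (fun n => n + 1 = (i : ℕ)) = {(i : ℕ) - 1} := by
      ext a; simp only [Finset.mem_filter, Finset.mem_range, Finset.mem_singleton]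
      omega
    rw [he, Finset.card_singleton]

lemma mem_TrS (m k : ℕ) (i x : Fin m) :
    x ∈ TrS m k i ↔ (i : ℕ) ≤ (x : ℕ) ∧ (x : ℕ) < (i : ℕ) + k := by
  simp [TrS]

lemma mem_FaS (m : ℕ) (i x : Fin m) : x ∈ FaS m i ↔ (x : ℕ) + 1 = (i : ℕ) := by
  simp [FaS]

lemma count_pattern (m m₁ : ℕ) (Tr Fa : Finset (Fin m)) (hd : Disjoint Tr Fa)
    (hT : Tr.card ≤ m₁) :
    ((OmS m m₁).filter
      (fun w => (∀ x ∈ Tr, w x = true) ∧ (∀ x ∈ Fa, w x = false))).card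
    = (m - Tr.card - Fa.card).choose (m₁ - Tr.card) := by
  unfold OmS
  have hcard : (Finset.univ \ (Tr ∪ Fa)).card = m - Tr.card - Fa.card := by
    rw [Finset.card_sdiff_of_subset (Finset.subset_univ _), Finset.card_union_of_disjoint hd]
    simp [Fintype.card_fin]
    omega
  rw [← hcard, ← Finset.card_powersetCard]
  apply Finset.card_nbij' (fun w => (Finset.univ.filter (fun x => w x = true)) \ Tr)
    (fun S => (fun x => decide (x ∈ Tr ∪ S)))
  · intro w hw
    rw [Finset.mem_coe] at hw ⊢
    simp only [Finset.mem_filter, Finset.mem_univ, true_and] at hw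
    obtain ⟨hwc, hTr, hFa⟩ := hw
    rw [Finset.mem_powersetCard]
    constructor
    · intro x hx
      simp only [Finset.mem_sdiff, Finset.mem_filter, Finset.mem_univ, true_and] at hx ⊢
      simp only [Finset.mem_union, not_or]
      exact ⟨hx.2, fun hxF => by simp [hFa x hxF] at hx⟩
    · rw [Finset.card_sdiff_of_subset]
      · rw [hwc]
      · intro x hx
        simp only [Finset.mem_filter, Finset.mem_univ, true_and]
        exact hTr x hx
  · intro S hS
    rw [Finset.mem_coe] at hS ⊢
    rw [Finset.mem_powersetCard] at hS
    obtain ⟨hSsub, hScard⟩ := hS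
    have hSTr : Disjoint S Tr := by
      refine Finset.disjoint_left.mpr fun x hx hxT => ?_
      have := hSsub hx
      simp [Finset.mem_sdiff, Finset.mem_union] at this
      exact this.1 hxT
    have hSFa : Disjoint S Fa := by
      refine Finset.disjoint_left.mpr fun x hx hxF => ?_
      have := hSsub hx
      simp [Finset.mem_sdiff, Finset.mem_union] at this
      exact this.2 hxF
    simp only [Finset.mem_filter, Finset.mem_univ, true_and]
    have hfil : (Finset.univ.filter (fun x => decide (x ∈ Tr ∪ S) = true)) = Tr ∪ S := by
      ext x; simp
    refine ⟨?_, ?_, ?_⟩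
    · rw [hfil, Finset.card_union_of_disjoint (hSTr.symm)]
      omega
    · intro x hx; simp [Finset.mem_union, hx]
    · intro x hx
      have h1 : x ∉ Tr := Finset.disjoint_right.mp hd hx
      have h2 : x ∉ S := Finset.disjoint_right.mp hSFa hx
      simp [Finset.mem_union, h1, h2]
  · intro w hw
    rw [Finset.mem_coe] at hw
    simp only [Finset.mem_filter, Finset.mem_univ, true_and] at hw
    obtain ⟨hwc, hTr, hFa⟩ := hw
    funext x
    by_cases hx : w x = true
    · by_cases hxT : x ∈ Tr <;> simp [Finset.mem_union, Finset.mem_sdiff, hx, hxT]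
    · have hxf : w x = false := by simpa using hx
      have hxT : x ∉ Tr := fun hxT => by simp [hTr x hxT] at hxf
      simp [Finset.mem_union, Finset.mem_sdiff, hxf, hxT]
  · intro S hS
    rw [Finset.mem_coe] at hS
    rw [Finset.mem_powersetCard] at hS
    obtain ⟨hSsub, hScard⟩ := hS
    ext x
    simp only [Finset.mem_sdiff, Finset.mem_filter, Finset.mem_univ, true_and, decide_eq_true_eq,
      Finset.mem_union]
    constructor
    · rintro ⟨h1 | h1, h2⟩
      · exact absurd h1 h2
      · exact h1
    · intro hx
      have := hSsub hx
      simp [Finset.mem_sdiff, Finset.mem_union] at this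
      exact ⟨Or.inr hx, this.1⟩


lemma count_pattern_zero (m m₁ : ℕ) (Tr Fa : Finset (Fin m))
    (hT : m₁ < Tr.card) :
    ((OmS m m₁).filter
      (fun w => (∀ x ∈ Tr, w x = true) ∧ (∀ x ∈ Fa, w x = false))).card = 0 := by
  rw [Finset.card_eq_zero]
  rw [Finset.eq_empty_iff_forall_notMem]
  intro w hw
  simp only [OmS, Finset.mem_filter, Finset.mem_univ, true_and] at hw
  obtain ⟨hwc, hTr, -⟩ := hw
  have : Tr ⊆ Finset.univ.filter (fun i => w i = true) := by
    intro x hx; simp only [Finset.mem_filter, Finset.mem_univ, true_and]; exact hTr x hx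
  have := Finset.card_le_card this
  omega

-- the pair-pattern evaluation
lemma g_eval (m m₁ k : ℕ) (hk1 : 1 ≤ k) (i j : Fin m)
    (hij : (i : ℕ) + k < (j : ℕ)) (hjk : (j : ℕ) + k ≤ m) :
    ((OmS m m₁).filter
      (fun w => i ≠ j ∧ startP m k i w ∧ startP m k j w)).card
    = if 2 * k ≤ m₁ then
        (m - 2 * k - (if (i : ℕ) = 0 then 1 else 2)).choose (m₁ - 2 * k)
      else 0 := by
  have hik : (i : ℕ) + k ≤ m := by omega
  have hTrd : Disjoint (TrS m k i) (TrS m k j) := by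
    rw [Finset.disjoint_left]
    intro x hx hx'
    rw [mem_TrS] at hx hx'
    omega
  have hFad : Disjoint (FaS m i) (FaS m j) := by
    rw [Finset.disjoint_left]
    intro x hx hx'
    rw [mem_FaS] at hx hx'
    omega
  have hTFd : Disjoint (TrS m k i ∪ TrS m k j) (FaS m i ∪ FaS m j) := by
    rw [Finset.disjoint_left]
    intro x hx hx'
    rw [Finset.mem_union, mem_TrS, mem_TrS] at hx
    rw [Finset.mem_union, mem_FaS, mem_FaS] at hx'
    omega
  have hTcard : (TrS m k i ∪ TrS m k j).card = 2 * k := by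
    rw [Finset.card_union_of_disjoint hTrd, TrS_card m k i hik, TrS_card m k j hjk]
    omega
  have hFcard : (FaS m i ∪ FaS m j).card = if (i : ℕ) = 0 then 1 else 2 := by
    rw [Finset.card_union_of_disjoint hFad, FaS_card, FaS_card]
    have : ¬ ((j : ℕ) = 0) := by omega
    rw [if_neg this]
    split <;> omega
  have hfil : (OmS m m₁).filter (fun w => i ≠ j ∧ startP m k i w ∧ startP m k j w)
      = (OmS m m₁).filter (fun w =>
          (∀ x ∈ TrS m k i ∪ TrS m k j, w x = true) ∧
          (∀ x ∈ FaS m i ∪ FaS m j, w x = false)) := by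
    apply Finset.filter_congr
    intro w _
    constructor
    · rintro ⟨_, ⟨_, hti, hfi⟩, ⟨_, htj, hfj⟩⟩
      constructor
      · intro x hx
        rw [Finset.mem_union, mem_TrS, mem_TrS] at hx
        rcases hx with hx | hx
        · exact hti x hx.1 hx.2
        · exact htj x hx.1 hx.2
      · intro x hx
        rw [Finset.mem_union, mem_FaS, mem_FaS] at hx
        rcases hx with hx | hx
        · exact hfi x hx
        · exact hfj x hx
    · rintro ⟨ht, hf⟩
      have hne : i ≠ j := by
        intro h; rw [h] at hij; omega
      refine ⟨hne, ⟨hik, ?_, ?_⟩, ⟨hjk, ?_, ?_⟩⟩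
      · intro x h1 h2; exact ht x (by rw [Finset.mem_union, mem_TrS]; exact Or.inl ⟨h1, h2⟩)
      · intro x h1; exact hf x (by rw [Finset.mem_union, mem_FaS]; exact Or.inl h1)
      · intro x h1 h2; exact ht x (by rw [Finset.mem_union, mem_TrS, mem_TrS]; exact Or.inr ⟨h1, h2⟩)
      · intro x h1; exact hf x (by rw [Finset.mem_union, mem_FaS, mem_FaS]; exact Or.inr h1)
  rw [hfil]
  by_cases h2k : 2 * k ≤ m₁
  · rw [if_pos h2k]
    have := count_pattern m m₁ (TrS m k i ∪ TrS m k j) (FaS m i ∪ FaS m j) hTFd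
      (by rw [hTcard]; exact h2k)
    rw [hTcard, hFcard] at this
    exact this
  · rw [if_neg h2k]
    exact count_pattern_zero m m₁ _ _ (by omega)

lemma g_zero (m m₁ k : ℕ) (i j : Fin m) (hlt : i < j)
    (hbad : ¬ ((i : ℕ) + k < (j : ℕ) ∧ (j : ℕ) + k ≤ m)) :
    ((OmS m m₁).filter
      (fun w => i ≠ j ∧ startP m k i w ∧ startP m k j w)).card = 0 := by
  rw [Finset.card_eq_zero, Finset.eq_empty_iff_forall_notMem]
  intro w hw
  simp only [Finset.mem_filter] at hw
  obtain ⟨-, hne, ⟨hik, hti, hfi⟩, ⟨hjkm, htj, hfj⟩⟩ := hw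
  rw [Fin.lt_def] at hlt
  by_cases hjm : (j : ℕ) + k ≤ m
  · have hle : (j : ℕ) ≤ (i : ℕ) + k := by omega
    have hjpos : 0 < (j : ℕ) := by omega
    set x : Fin m := ⟨(j : ℕ) - 1, by omega⟩ with hx
    have ht : w x = true := hti x (by simp [hx]; omega) (by simp [hx]; omega)
    have hf : w x = false := hfj x (by simp [hx]; omega)
    rw [ht] at hf
    exact absurd hf (by simp)
  · omega

lemma OmS_card (m m₁ : ℕ) (h : m₁ ≤ m) : (OmS m m₁).card = m.choose m₁ := by
  have := count_pattern m m₁ ∅ ∅ (Finset.disjoint_empty_left _) (by simp)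
  simpa using this

-- symmetry of the pair counter
lemma g_symm (m m₁ k : ℕ) (i j : Fin m) :
    ((OmS m m₁).filter
      (fun w => i ≠ j ∧ startP m k i w ∧ startP m k j w)).card
    = ((OmS m m₁).filter
      (fun w => j ≠ i ∧ startP m k j w ∧ startP m k i w)).card := by
  congr 1
  apply Finset.filter_congr
  intro w _
  constructor
  · rintro ⟨h1, h2, h3⟩; exact ⟨h1.symm, h3, h2⟩
  · rintro ⟨h1, h2, h3⟩; exact ⟨h1.symm, h3, h2⟩

lemma g_diag (m m₁ k : ℕ) (i : Fin m) :
    ((OmS m m₁).filter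
      (fun w => i ≠ i ∧ startP m k i w ∧ startP m k i w)).card = 0 := by
  rw [Finset.card_eq_zero, Finset.eq_empty_iff_forall_notMem]
  intro w hw
  simp only [Finset.mem_filter, ne_eq, not_true_eq_false, false_and] at hw
  exact hw.2

def cg (m m₁ k d : ℕ) : ℕ :=
  if 2 * k ≤ m₁ then (m - 2 * k - d).choose (m₁ - 2 * k) else 0

lemma main_count (m₁ m₂ m k : ℕ) (hm₁ : 1 ≤ m₁) (hm : m = m₁ + m₂)
    (hk1 : 1 ≤ k) (hk2 : k ≤ m₁) (hk3 : 2 * k ≤ m) :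
    ∑ w ∈ OmS m m₁, (runsAtLeast' m k w * runsAtLeast' m k w - runsAtLeast' m k w)
    = 2 * (m - 2 * k) * cg m m₁ k 1
      + ((m - 2 * k) * (m - 2 * k) - (m - 2 * k)) * cg m m₁ k 2 := by
  set L := m - 2 * k with hL
  set F : Fin m × Fin m → ℕ := fun p =>
    ((OmS m m₁).filter
      (fun w => p.1 ≠ p.2 ∧ startP m k p.1 w ∧ startP m k p.2 w)).card with hF
  -- step 1 : sum over strings = sum over pairs
  have step1 : ∑ w ∈ OmS m m₁, (runsAtLeast' m k w * runsAtLeast' m k w - runsAtLeast' m k w)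
      = ∑ p ∈ Finset.univ ×ˢ Finset.univ, F p := by
    have hper : ∀ w : Fin m → Bool,
        runsAtLeast' m k w * runsAtLeast' m k w - runsAtLeast' m k w
        = ∑ p ∈ Finset.univ ×ˢ Finset.univ,
            (if p.1 ≠ p.2 ∧ startP m k p.1 w ∧ startP m k p.2 w then 1 else 0) := by
      intro w
      rw [runsAtLeast'_eq, ← Finset.offDiag_card]
      have hod : (Finset.univ.filter (fun i : Fin m => startP m k i w)).offDiag
          = (Finset.univ ×ˢ Finset.univ).filter
              (fun p => p.1 ≠ p.2 ∧ startP m k p.1 w ∧ startP m k p.2 w) := by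
        ext p
        simp only [Finset.mem_offDiag, Finset.mem_filter, Finset.mem_product, Finset.mem_univ,
          true_and]
        tauto
      rw [hod, Finset.card_filter]
    calc ∑ w ∈ OmS m m₁, (runsAtLeast' m k w * runsAtLeast' m k w - runsAtLeast' m k w)
        = ∑ w ∈ OmS m m₁, ∑ p ∈ Finset.univ ×ˢ Finset.univ,
            (if p.1 ≠ p.2 ∧ startP m k p.1 w ∧ startP m k p.2 w then 1 else 0) :=
          Finset.sum_congr rfl (fun w _ => hper w)
      _ = ∑ p ∈ Finset.univ ×ˢ Finset.univ, ∑ w ∈ OmS m m₁,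
            (if p.1 ≠ p.2 ∧ startP m k p.1 w ∧ startP m k p.2 w then 1 else 0) :=
          Finset.sum_comm
      _ = ∑ p ∈ Finset.univ ×ˢ Finset.univ, F p :=
          Finset.sum_congr rfl (fun p _ => (Finset.card_filter _ _).symm)
  -- step 2 : symmetry
  have step2 : ∑ p ∈ Finset.univ ×ˢ Finset.univ, F p
      = 2 * ∑ p ∈ (Finset.univ ×ˢ Finset.univ).filter (fun p : Fin m × Fin m => p.1 < p.2), F p :=
    two_mul_sum_lt Finset.univ F (fun a b => g_symm m m₁ k a b) (fun a => g_diag m m₁ k a)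
  -- step 3 : restrict to good pairs
  set Good : Finset (Fin m × Fin m) := (Finset.univ ×ˢ Finset.univ).filter
    (fun p => (p.1 : ℕ) + k < (p.2 : ℕ) ∧ (p.2 : ℕ) + k ≤ m) with hGood
  have step3 : ∑ p ∈ (Finset.univ ×ˢ Finset.univ).filter
        (fun p : Fin m × Fin m => p.1 < p.2), F p = ∑ p ∈ Good, F p := by
    refine (Finset.sum_subset ?_ ?_).symm
    · intro p hp
      simp only [hGood, Finset.mem_filter, Finset.mem_product, Finset.mem_univ, true_and] at hp ⊢
      exact Fin.lt_def.mpr (by omega)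
    · intro p hp hnp
      simp only [hGood, Finset.mem_filter, Finset.mem_product, Finset.mem_univ, true_and]
        at hp hnp
      exact g_zero m m₁ k p.1 p.2 hp (by tauto)
  -- step 4 : split by whether the first coordinate is 0
  have step4 : ∑ p ∈ Good, F p
      = ∑ p ∈ Good.filter (fun p => (p.1 : ℕ) = 0), F p
        + ∑ p ∈ Good.filter (fun p => ¬ (p.1 : ℕ) = 0), F p :=
    (Finset.sum_filter_add_sum_filter_not Good _ F).symm
  -- step 5 : evaluate on Good₀
  have step5 : ∑ p ∈ Good.filter (fun p => (p.1 : ℕ) = 0), F p = L * cg m m₁ k 1 := by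
    have hconst : ∀ p ∈ Good.filter (fun p : Fin m × Fin m => (p.1 : ℕ) = 0),
        F p = cg m m₁ k 1 := by
      intro p hp
      simp only [hGood, Finset.mem_filter, Finset.mem_product, Finset.mem_univ, true_and] at hp
      obtain ⟨⟨h1, h2⟩, h0⟩ := hp
      calc F p = _ := g_eval m m₁ k hk1 p.1 p.2 h1 h2
        _ = cg m m₁ k 1 := by unfold cg; simp [h0]
    rw [Finset.sum_congr rfl hconst, Finset.sum_const, smul_eq_mul]
    congr 1
    -- card of Good₀ is L
    have hnat : ((Finset.range m).filter (fun j => k < j ∧ j + k ≤ m)).card = L := by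
      have : (Finset.range m).filter (fun j => k < j ∧ j + k ≤ m)
          = Finset.Ico (k + 1) (m - k + 1) := by
        ext a; simp only [Finset.mem_filter, Finset.mem_range, Finset.mem_Ico]; omega
      rw [this, Nat.card_Ico]; omega
    rw [← hnat]
    apply Finset.card_nbij (fun p => ((p.2 : Fin m) : ℕ))
    · intro p hp
      simp only [hGood, Finset.mem_coe, Finset.mem_filter, Finset.mem_product, Finset.mem_univ, true_and,
        Finset.mem_range] at hp ⊢
      have := p.2.isLt
      omega
    · intro p hp q hq h
      simp only [hGood, Finset.coe_filter, Set.mem_setOf_eq, Finset.mem_filter,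
        Finset.mem_product, Finset.mem_univ, true_and] at hp hq
      have h2 : p.2 = q.2 := Fin.ext h
      have h1 : p.1 = q.1 := Fin.ext (by omega)
      exact Prod.ext h1 h2
    · intro b hb
      simp only [hGood, Finset.coe_filter, Set.mem_setOf_eq, Finset.mem_range, Set.mem_image,
        Finset.mem_coe, Finset.mem_filter, Finset.mem_product, Finset.mem_univ, true_and] at hb ⊢
      have hmpos : 0 < m := by omega
      refine ⟨(⟨0, hmpos⟩, ⟨b, hb.1⟩), ?_, rfl⟩
      simp only [hGood, Finset.mem_coe, Finset.mem_filter, Finset.mem_product, Finset.mem_univ,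
        true_and, Fin.val_mk]
      exact ⟨⟨by omega, hb.2.2⟩, trivial⟩
  -- step 6 : evaluate on Good₊
  have step6 : ∃ G : ℕ, (∑ p ∈ Good.filter (fun p => ¬ (p.1 : ℕ) = 0), F p = G * cg m m₁ k 2)
      ∧ 2 * G = L * L - L := by
    refine ⟨(Good.filter (fun p => ¬ (p.1 : ℕ) = 0)).card, ?_, ?_⟩
    · have hconst : ∀ p ∈ Good.filter (fun p : Fin m × Fin m => ¬ (p.1 : ℕ) = 0),
          F p = cg m m₁ k 2 := by
        intro p hp
        simp only [hGood, Finset.mem_filter, Finset.mem_product, Finset.mem_univ, true_and] at hp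
        obtain ⟨⟨h1, h2⟩, h0⟩ := hp
        calc F p = _ := g_eval m m₁ k hk1 p.1 p.2 h1 h2
          _ = cg m m₁ k 2 := by unfold cg; simp [h0]
      rw [Finset.sum_congr rfl hconst, Finset.sum_const, smul_eq_mul]
    · -- card: bijection with pairs a < b < L
      have hbij : (Good.filter (fun p => ¬ (p.1 : ℕ) = 0)).card
          = (((Finset.range L) ×ˢ (Finset.range L)).filter
              (fun p => p.1 < p.2)).card := by
        apply Finset.card_nbij (fun p => (((p.1 : Fin m) : ℕ) - 1, ((p.2 : Fin m) : ℕ) - k - 1))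
        · intro p hp
          simp only [hGood, Finset.mem_coe, Finset.mem_filter, Finset.mem_product, Finset.mem_univ, true_and,
            Finset.mem_range] at hp ⊢
          have := p.2.isLt
          omega
        · intro p hp q hq h
          simp only [hGood, Finset.coe_filter, Set.mem_setOf_eq, Finset.mem_filter,
            Finset.mem_product, Finset.mem_univ, true_and] at hp hq
          simp only [Prod.mk.injEq] at h
          have h1 : p.1 = q.1 := Fin.ext (by omega)
          have h2 : p.2 = q.2 := Fin.ext (by omega)
          exact Prod.ext h1 h2
        · intro b hb
          simp only [hGood, Finset.coe_filter, Set.mem_setOf_eq, Finset.mem_range, Set.mem_image,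
            Finset.mem_coe, Finset.mem_filter, Finset.mem_product, Finset.mem_univ, true_and,
            Finset.mem_product] at hb ⊢
          obtain ⟨⟨hb1, hb2⟩, hblt⟩ := hb
          have h1m : b.1 + 1 < m := by omega
          have h2m : b.2 + k + 1 < m := by omega
          refine ⟨(⟨b.1 + 1, h1m⟩, ⟨b.2 + k + 1, h2m⟩), ?_, ?_⟩
          · simp only [hGood, Finset.mem_coe, Finset.mem_filter, Finset.mem_product,
              Finset.mem_univ, true_and, Fin.val_mk]
            omega
          · apply Prod.ext <;> simp only [Fin.val_mk] <;> omega
      rw [hbij]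
      -- 2 * card T3 = L * L - L
      have h2m := two_mul_sum_lt (Finset.range L)
        (fun p => if p.1 ≠ p.2 then 1 else 0)
        (by intro a b; simp only [ne_eq]; by_cases h : a = b <;> simp [h, Ne.symm, eq_comm])
        (by intro a; simp)
      have hleft : ∑ p ∈ Finset.range L ×ˢ Finset.range L,
          (if p.1 ≠ p.2 then 1 else 0) = L * L - L := by
        have hod : (Finset.range L).offDiag
            = (Finset.range L ×ˢ Finset.range L).filter (fun p => p.1 ≠ p.2) := by
          ext p
          simp only [Finset.mem_offDiag, Finset.mem_filter, Finset.mem_product]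
          tauto
        rw [← Finset.card_filter, ← hod, Finset.offDiag_card, Finset.card_range]
      have hright : ∑ p ∈ ((Finset.range L) ×ˢ (Finset.range L)).filter (fun p => p.1 < p.2),
          (if p.1 ≠ p.2 then 1 else 0)
          = (((Finset.range L) ×ˢ (Finset.range L)).filter (fun p => p.1 < p.2)).card := by
        rw [Finset.card_eq_sum_ones]
        apply Finset.sum_congr rfl
        intro p hp
        simp only [Finset.mem_filter] at hp
        rw [if_pos (ne_of_lt hp.2)]
      rw [hleft, hright] at h2m
      omega
  obtain ⟨G, hG1, hG2⟩ := step6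
  rw [step1, step2, step3, step4, step5, hG1]
  have : 2 * (L * cg m m₁ k 1 + G * cg m m₁ k 2)
      = 2 * L * cg m m₁ k 1 + (2 * G) * cg m m₁ k 2 := by ring
  rw [this, hG2]

lemma key1 (n t : ℕ) : n * (n - 1).choose t = n.choose t * (n - t) := by
  cases n with
  | zero => simp
  | succ n =>
    rw [Nat.succ_sub_one]
    rw [Nat.add_one_mul_choose_eq, Nat.choose_succ_right_eq]

lemma final_arith (m₁ m₂ m k : ℕ) (hm₁ : 1 ≤ m₁) (hm : m = m₁ + m₂)
    (hk1 : 1 ≤ k) (hk2 : k ≤ m₁) (hk3 : 2 * k ≤ m) :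
    (2 * (m - 2 * k) * cg m m₁ k 1
      + ((m - 2 * k) * (m - 2 * k) - (m - 2 * k)) * cg m m₁ k 2) * m.descFactorial (2 * k)
    = (m₂ + 1).descFactorial 2 * m₁.descFactorial (2 * k) * m.choose m₁ := by
  by_cases h2k : 2 * k ≤ m₁
  case neg =>
    have h0 : m₁.descFactorial (2 * k) = 0 := Nat.descFactorial_of_lt (by omega)
    unfold cg
    rw [if_neg h2k, if_neg h2k, h0]
    ring
  case pos =>
    have hcg1 : cg m m₁ k 1 = (m - 2 * k - 1).choose (m₁ - 2 * k) := by
      unfold cg; rw [if_pos h2k]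
    have hcg2 : cg m m₁ k 2 = (m - 2 * k - 2).choose (m₁ - 2 * k) := by
      unfold cg; rw [if_pos h2k]
    rw [hcg1, hcg2]
    -- descFactorial of (m₂+1) at 2
    have hd2 : (m₂ + 1).descFactorial 2 = m₂ * (m₂ + 1) := by
      simp [Nat.descFactorial_succ]
    -- step A
    have hA : 2 * (m - 2 * k) * (m - 2 * k - 1).choose (m₁ - 2 * k)
        = 2 * ((m - 2 * k).choose (m₁ - 2 * k) * m₂) := by
      rw [mul_assoc, key1 (m - 2 * k) (m₁ - 2 * k)]
      rw [show m - 2 * k - (m₁ - 2 * k) = m₂ by omega]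
    -- step B
    have hLL : (m - 2 * k) * (m - 2 * k) - (m - 2 * k)
        = (m - 2 * k) * (m - 2 * k - 1) := by
      cases h : (m - 2 * k) with
      | zero => simp
      | succ l =>
        rw [Nat.succ_sub_one]
        have he : (l + 1) * (l + 1) = (l + 1) * l + (l + 1) := by ring
        rw [he, Nat.add_sub_cancel]
    have hB : ((m - 2 * k) * (m - 2 * k) - (m - 2 * k)) * (m - 2 * k - 2).choose (m₁ - 2 * k)
        = (m - 2 * k).choose (m₁ - 2 * k) * (m₂ * (m₂ - 1)) := by
      rw [hLL]
      rw [show m - 2 * k - 2 = (m - 2 * k - 1) - 1 by omega]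
      rw [mul_assoc, key1 (m - 2 * k - 1) (m₁ - 2 * k)]
      rw [show m - 2 * k - 1 - (m₁ - 2 * k) = m₂ - 1 by omega]
      rw [← mul_assoc, key1 (m - 2 * k) (m₁ - 2 * k)]
      rw [show m - 2 * k - (m₁ - 2 * k) = m₂ by omega]
      ring
    rw [hA, hB, hd2]
    -- combine into single factor
    have hcomb : 2 * ((m - 2 * k).choose (m₁ - 2 * k) * m₂)
        + (m - 2 * k).choose (m₁ - 2 * k) * (m₂ * (m₂ - 1))
        = (m₂ * (m₂ + 1)) * (m - 2 * k).choose (m₁ - 2 * k) := by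
      cases m₂ with
      | zero => simp
      | succ n =>
        rw [Nat.succ_sub_one]
        ring
    rw [hcomb]
    -- the key binomial/descFactorial identity
    have e1 : (m₁ - 2 * k).factorial * m₁.descFactorial (2 * k) = m₁.factorial :=
      Nat.factorial_mul_descFactorial h2k
    have e2 : m.choose m₁ * m₁.factorial * m₂.factorial = m.factorial := by
      have h := Nat.choose_mul_factorial_mul_factorial (show m₁ ≤ m by omega)
      rw [show m - m₁ = m₂ by omega] at h
      exact h
    have e3 : (m - 2 * k).choose (m₁ - 2 * k) * (m₁ - 2 * k).factorial * m₂.factorial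
        = (m - 2 * k).factorial := by
      have h := Nat.choose_mul_factorial_mul_factorial (show m₁ - 2 * k ≤ m - 2 * k by omega)
      rw [show m - 2 * k - (m₁ - 2 * k) = m₂ by omega] at h
      exact h
    have e4 : (m - 2 * k).factorial * m.descFactorial (2 * k) = m.factorial :=
      Nat.factorial_mul_descFactorial hk3
    have key2 : (m - 2 * k).choose (m₁ - 2 * k) * m.descFactorial (2 * k)
        = m₁.descFactorial (2 * k) * m.choose m₁ := by
      apply Nat.eq_of_mul_eq_mul_right
        (show 0 < (m₁ - 2 * k).factorial * m₂.factorial by positivity)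
      calc (m - 2 * k).choose (m₁ - 2 * k) * m.descFactorial (2 * k)
            * ((m₁ - 2 * k).factorial * m₂.factorial)
          = ((m - 2 * k).choose (m₁ - 2 * k) * (m₁ - 2 * k).factorial * m₂.factorial)
            * m.descFactorial (2 * k) := by ring
        _ = (m - 2 * k).factorial * m.descFactorial (2 * k) := by rw [e3]
        _ = m.factorial := e4
        _ = m.choose m₁ * m₁.factorial * m₂.factorial := e2.symm
        _ = m.choose m₁ * ((m₁ - 2 * k).factorial * m₁.descFactorial (2 * k)) * m₂.factorial := by
            rw [e1]
        _ = m₁.descFactorial (2 * k) * m.choose m₁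
            * ((m₁ - 2 * k).factorial * m₂.factorial) := by ring
    calc (m₂ * (m₂ + 1)) * (m - 2 * k).choose (m₁ - 2 * k) * m.descFactorial (2 * k)
        = (m₂ * (m₂ + 1))
          * ((m - 2 * k).choose (m₁ - 2 * k) * m.descFactorial (2 * k)) := by ring
      _ = (m₂ * (m₂ + 1)) * (m₁.descFactorial (2 * k) * m.choose m₁) := by rw [key2]
      _ = m₂ * (m₂ + 1) * m₁.descFactorial (2 * k) * m.choose m₁ := by ring

lemma cast_sq_sub (a : ℕ) : ((a * a - a : ℕ) : ℝ) = (a : ℝ) ^ 2 - (a : ℝ) := by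
  have h : a ≤ a * a := by
    cases a with
    | zero => simp
    | succ n => exact Nat.le_mul_of_pos_left _ (Nat.succ_pos n)
  push_cast [Nat.cast_sub h]
  ring


/-- Mood's variance formula for runs (Lemma `LemmaDistributionTheory`):
under the uniform distribution on binary strings of length `m = m₁ + m₂` with
exactly `m₁` symbols `a` (`true`), with `E` the expected number of runs of `a`'s
of length at least `k` (`1 ≤ k ≤ m₁`, `2k ≤ m`), the variance equals
`(m₂+1)^(2)·m₁^(2k) / m^(2k) + E·(1 − E)` (falling factorials). -/
theorem runs_variance (m₁ m₂ m k : ℕ) (hm₁ : 1 ≤ m₁) (hm : m = m₁ + m₂)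
    (hk1 : 1 ≤ k) (hk2 : k ≤ m₁) (hk3 : 2 * k ≤ m)
    (Ω : Finset (Fin m → Bool))
    (hΩ : Ω = Finset.univ.filter
      (fun w => (Finset.univ.filter (fun i => w i = true)).card = m₁))
    (E : ℝ) (hE : E = (∑ w ∈ Ω, (runsAtLeast m k w : ℝ)) / (Ω.card : ℝ)) :
    (∑ w ∈ Ω, ((runsAtLeast m k w : ℝ) - E) ^ 2) / (Ω.card : ℝ) =
      (((m₂ + 1).descFactorial 2 * m₁.descFactorial (2 * k) : ℕ) : ℝ) /
          (m.descFactorial (2 * k) : ℝ) + E * (1 - E) := by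
  have hrr : runsAtLeast = runsAtLeast' := rfl
  have hΩ' : Ω = OmS m m₁ := hΩ
  subst hΩ'
  rw [hrr] at hE ⊢
  -- cardinality facts
  have hcard : (OmS m m₁).card = m.choose m₁ := OmS_card m m₁ (by omega)
  have hNpos : 0 < (OmS m m₁).card := by
    rw [hcard]; exact Nat.choose_pos (by omega)
  have hNR : ((OmS m m₁).card : ℝ) ≠ 0 := by positivity
  have hDpos : 0 < m.descFactorial (2 * k) := by
    rcases Nat.eq_zero_or_pos (m.descFactorial (2 * k)) with h | h
    · rw [Nat.descFactorial_eq_zero_iff_lt] at h; omega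
    · exact h
  have hDR : ((m.descFactorial (2 * k) : ℕ) : ℝ) ≠ 0 := by positivity
  -- the combinatorial identity
  have hnat : (∑ w ∈ OmS m m₁, (runsAtLeast' m k w * runsAtLeast' m k w - runsAtLeast' m k w))
      * m.descFactorial (2 * k)
      = ((m₂ + 1).descFactorial 2 * m₁.descFactorial (2 * k)) * (OmS m m₁).card := by
    rw [main_count m₁ m₂ m k hm₁ hm hk1 hk2 hk3,
      final_arith m₁ m₂ m k hm₁ hm hk1 hk2 hk3, hcard]
  set T : ℕ := ∑ w ∈ OmS m m₁,
    (runsAtLeast' m k w * runsAtLeast' m k w - runsAtLeast' m k w) with hTdef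
  have hTR : (T : ℝ) = (∑ w ∈ OmS m m₁, ((runsAtLeast' m k w : ℝ) ^ 2 - (runsAtLeast' m k w : ℝ))) := by
    rw [hTdef, Nat.cast_sum]
    exact Finset.sum_congr rfl (fun w _ => cast_sq_sub _)
  have hTfrac : (T : ℝ) / ((OmS m m₁).card : ℝ)
      = (((m₂ + 1).descFactorial 2 * m₁.descFactorial (2 * k) : ℕ) : ℝ) /
          ((m.descFactorial (2 * k) : ℕ) : ℝ) := by
    rw [div_eq_div_iff hNR hDR]
    have := congrArg (fun n : ℕ => (n : ℝ)) hnat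
    push_cast at this ⊢
    linarith
  -- expectation bookkeeping
  have hSX : ∑ w ∈ OmS m m₁, (runsAtLeast' m k w : ℝ) = ((OmS m m₁).card : ℝ) * E := by
    rw [hE]; field_simp
  have hSX2 : ∑ w ∈ OmS m m₁, ((runsAtLeast' m k w : ℝ)) ^ 2
      = (T : ℝ) + ∑ w ∈ OmS m m₁, (runsAtLeast' m k w : ℝ) := by
    rw [hTR, Finset.sum_sub_distrib]
    ring
  have hexp : ∑ w ∈ OmS m m₁, ((runsAtLeast' m k w : ℝ) - E) ^ 2
      = (T : ℝ) + ((OmS m m₁).card : ℝ) * E - ((OmS m m₁).card : ℝ) * E ^ 2 := by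
    have h1 : ∑ w ∈ OmS m m₁, ((runsAtLeast' m k w : ℝ) - E) ^ 2
        = ∑ w ∈ OmS m m₁, ((runsAtLeast' m k w : ℝ) ^ 2
            - 2 * E * (runsAtLeast' m k w : ℝ) + E ^ 2) :=
      Finset.sum_congr rfl (fun w _ => by ring)
    rw [h1, Finset.sum_add_distrib, Finset.sum_sub_distrib, ← Finset.mul_sum,
      Finset.sum_const, nsmul_eq_mul, hSX2, hSX]
    ring
  rw [hexp]
  have hfinal : ((T : ℝ) + ((OmS m m₁).card : ℝ) * E - ((OmS m m₁).card : ℝ) * E ^ 2)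
      / ((OmS m m₁).card : ℝ)
      = (T : ℝ) / ((OmS m m₁).card : ℝ) + E - E ^ 2 := by
    field_simp
  rw [hfinal, hTfrac]
  push_cast
  ring
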